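/- A sheaf M of modules on a finite poset P is flabby (every restriction M(P) → M(U) to an open set is surjective) if and only if for every y ∈ P the restriction map ∂_y : M(y) → M(∂y) from the stalk at y to the sections on the punctured neighborhood ∂y = {z | z < y} is surjective. -/

import Mathlib

set_option linter.unusedSectionVars false

open CategoryTheory TopologicalSpace Opposite

variable (P : Type) [PartialOrder P] [Fintype P]

/-- The down-set (Alexandrov) topology on a poset: a set is open iff it is a lower set. -/
instance downTopology : TopologicalSpace P where
  IsOpen U := IsLowerSet U
  isOpen_univ := isLowerSet_univ
  isOpen_inter := fun _ _ hs ht => hs.inter ht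
  isOpen_sUnion := fun _ h => isLowerSet_sUnion h

variable {P}

/-- The minimal open neighborhood `U_y = {z | z ≤ y}` of `y`. -/
def Ux (y : P) : Opens P :=
  ⟨{z : P | z ≤ y}, fun _ _ hba ha => le_trans hba ha⟩

/-- The punctured neighborhood `∂y = {z | z < y}`, which is open. -/
def punct (y : P) : Opens P :=
  ⟨{z : P | z < y}, fun _ _ hba ha => lt_of_le_of_lt hba ha⟩

theorem punct_le_Ux (y : P) : punct y ≤ Ux y := fun _ hz => le_of_lt hz

lemma res_res (R : Type) [CommRing R] (M : TopCat.Sheaf (ModuleCat R) (TopCat.of P))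
    {A B C : Opens P} (h1 : A ≤ B) (h2 : B ≤ C) (x : M.val.obj (op C)) :
    M.val.map (op (homOfLE h1)) (M.val.map (op (homOfLE h2)) x)
      = M.val.map (op (homOfLE (h1.trans h2))) x := by
  have : M.val.map (op (homOfLE h2)) ≫ M.val.map (op (homOfLE h1))
      = M.val.map (op (homOfLE (h1.trans h2))) := by
    rw [← Functor.map_comp]; rfl
  exact ConcreteCategory.congr_hom this x

lemma res_self (R : Type) [CommRing R] (M : TopCat.Sheaf (ModuleCat R) (TopCat.of P))
    {A : Opens P} (h : A ≤ A) (x : M.val.obj (op A)) :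
    M.val.map (op (homOfLE h)) x = x := by
  have h1 : op (homOfLE h) = 𝟙 (op A) := rfl
  rw [h1, M.val.map_id]
  rfl

universe v

lemma pullback_elem_surj {R : Type} [CommRing R] {A B X : ModuleCat.{v} R}
    (f : A ⟶ X) (g : B ⟶ X) (c : Limits.PullbackCone f g) (hc : Limits.IsLimit c)
    (a : A) (b : B) (hab : f a = g b) :
    ∃ w : c.pt, c.fst w = a ∧ c.snd w = b := by
  let ha : ModuleCat.of R (ULift.{v} R) ⟶ A :=
    ModuleCat.ofHom ((LinearMap.toSpanSingleton R A a).comp ULift.moduleEquiv.toLinearMap)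
  let hb : ModuleCat.of R (ULift.{v} R) ⟶ B :=
    ModuleCat.ofHom ((LinearMap.toSpanSingleton R B b).comp ULift.moduleEquiv.toLinearMap)
  have comm : ha ≫ f = hb ≫ g := by
    apply ModuleCat.hom_ext
    apply LinearMap.ext
    intro x
    show f (ha x) = g (hb x)
    show f (x.down • a) = g (x.down • b)
    rw [map_smul, map_smul, hab]
  obtain ⟨l, hl1, hl2⟩ := Limits.PullbackCone.IsLimit.lift' hc ha hb comm
  refine ⟨l (ULift.up 1), ?_, ?_⟩
  · have h := ConcreteCategory.congr_hom hl1 (ULift.up 1)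
    have h' : c.fst (l (ULift.up 1)) = (1 : R) • a := h
    rwa [one_smul] at h'
  · have h := ConcreteCategory.congr_hom hl2 (ULift.up 1)
    have h' : c.snd (l (ULift.up 1)) = (1 : R) • b := h
    rwa [one_smul] at h'

lemma glue_two {R : Type} [CommRing R] {X : TopCat} (M : TopCat.Sheaf (ModuleCat.{v} R) X)
    (U V : Opens X) (s : M.val.obj (op U)) (t : M.val.obj (op V))
    (hab : M.val.map (homOfLE (inf_le_left : U ⊓ V ≤ U)).op s
      = M.val.map (homOfLE (inf_le_right : U ⊓ V ≤ V)).op t) :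
    ∃ w : M.val.obj (op (U ⊔ V)),
      M.val.map (homOfLE (le_sup_left : U ≤ U ⊔ V)).op w = s ∧
      M.val.map (homOfLE (le_sup_right : V ≤ U ⊔ V)).op w = t := by
  obtain ⟨w, hw1, hw2⟩ := pullback_elem_surj _ _ (M.interUnionPullbackCone U V)
    (M.isLimitPullbackCone U V) s t hab
  exact ⟨w, hw1, hw2⟩

lemma extend_key (R : Type) [CommRing R] (M : TopCat.Sheaf (ModuleCat.{v} R) (TopCat.of P))
    (hy : ∀ y : P, Function.Surjective
        (M.val.map (op (homOfLE (punct_le_Ux y))))) :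
    ∀ (n : ℕ) (U V : Opens P) (h : U ≤ V),
      ((V : Set P) \ (U : Set P)).ncard ≤ n →
      Function.Surjective (M.val.map (op (homOfLE h))) := by
  intro n
  induction n with
  | zero =>
    intro U V h hcard s
    have hUV : U = V := by
      apply le_antisymm h
      intro z hz
      by_contra hzU
      have hne : ((V : Set P) \ (U : Set P)).Nonempty := ⟨z, hz, hzU⟩
      have := Set.ncard_pos (Set.toFinite _) |>.mpr hne
      omega
    subst hUV
    exact ⟨s, res_self R M h s⟩
  | succ n ih =>
    intro U V h hcard s
    by_cases hVU : V ≤ U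
    · have hUV : U = V := le_antisymm h hVU
      subst hUV
      exact ⟨s, res_self R M h s⟩
    · have hne : ((V : Set P) \ (U : Set P)).Nonempty := by
        rw [Set.diff_nonempty]; exact hVU
      obtain ⟨y, hyS, hymin⟩ : ∃ y ∈ ((V : Set P) \ (U : Set P)), ∀ a' ∈ ((V : Set P) \ (U : Set P)),
          id a' ≤ id y → id y = id a' := by
        obtain ⟨y, hy⟩ := (Set.toFinite _).exists_minimal hne
        exact ⟨y, hy.1, fun a ha h => le_antisymm (hy.2 ha h) h⟩
      have hyV : y ∈ V := hyS.1
      have hyU : y ∉ U := hyS.2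
      have hpU : punct y ≤ U := by
        intro z hz
        by_contra hzU
        have hzV : z ∈ V := V.2 (le_of_lt hz) hyV
        have := hymin z ⟨hzV, hzU⟩ (le_of_lt hz)
        simp only [id] at this
        exact absurd this.symm (ne_of_lt hz)
      have hUxV : Ux y ≤ V := fun z hz => V.2 hz hyV
      obtain ⟨t, ht⟩ := hy y (M.val.map (op (homOfLE hpU)) s)
      have hUUx : U ⊓ Ux y ≤ punct y := by
        intro z hz
        rcases lt_or_eq_of_le (hz.2 : z ≤ y) with hlt | heq
        · exact hlt
        · exact absurd (heq ▸ hz.1) hyU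
      -- compatibility of s and t on U ⊓ Ux y
      have hab : M.val.map (op (homOfLE (inf_le_left : U ⊓ Ux y ≤ U))) s
          = M.val.map (op (homOfLE (inf_le_right : U ⊓ Ux y ≤ Ux y))) t :=
        calc M.val.map (op (homOfLE (inf_le_left : U ⊓ Ux y ≤ U))) s
            = M.val.map (op (homOfLE hUUx)) (M.val.map (op (homOfLE hpU)) s) :=
              (res_res R M hUUx hpU s).symm
          _ = M.val.map (op (homOfLE hUUx))
                (M.val.map (op (homOfLE (punct_le_Ux y))) t) := by rw [ht]
          _ = M.val.map (op (homOfLE (inf_le_right : U ⊓ Ux y ≤ Ux y))) t :=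
              res_res R M hUUx (punct_le_Ux y) t
      let Uy : Opens P := Ux y
      obtain ⟨w, hw1, hw2⟩ := glue_two M U Uy s t hab
      let W : Opens P := U ⊔ Uy
      have hUW : U ≤ W := le_sup_left
      have hUxW : Ux y ≤ W := le_sup_right
      have hWV : W ≤ V := sup_le h hUxV
      have hcard' : ((V : Set P) \ (W : Set P)).ncard ≤ n := by
        have hsub : ((V : Set P) \ (W : Set P)) ⊂ ((V : Set P) \ (U : Set P)) := by
          constructor
          · intro z hz
            exact ⟨hz.1, fun hzU => hz.2 (hUW hzU)⟩
          · intro hsub2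
            have : y ∈ (V : Set P) \ (W : Set P) := hsub2 ⟨hyV, hyU⟩
            exact this.2 (hUxW (le_refl y))
        have := Set.ncard_lt_ncard hsub (Set.toFinite _)
        omega
      obtain ⟨v', hv⟩ := ih W V hWV hcard' w
      refine ⟨v', ?_⟩
      calc M.val.map (op (homOfLE h)) v'
          = M.val.map (op (homOfLE hUW)) (M.val.map (op (homOfLE hWV)) v') :=
            (res_res R M hUW hWV v').symm
        _ = M.val.map (op (homOfLE hUW)) w := by rw [hv]
        _ = s := hw1

/-- a sheaf of modules on a finite poset (down-set topology) is flabby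
(every restriction from global sections to an open set is surjective) if and only if
for every `y` the restriction `∂_y : M(y) → M(∂y)` from the stalk at `y` to the sections
over the punctured neighborhood `∂y = {z | z < y}` is surjective. -/
theorem stmt3 (R : Type) [CommRing R]
    (M : TopCat.Sheaf (ModuleCat R) (TopCat.of P)) :
    (∀ U : Opens P, Function.Surjective
        (M.val.map (op (homOfLE (le_top : U ≤ ⊤))))) ↔
      ∀ y : P, Function.Surjective
        (M.val.map (op (homOfLE (punct_le_Ux y)))) := by
  constructor
  · intro hfl y s
    obtain ⟨t, ht⟩ := hfl (punct y) s
    refine ⟨M.val.map (op (homOfLE (le_top : Ux y ≤ ⊤))) t, ?_⟩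
    have h1 := res_res R M (punct_le_Ux y) (le_top : Ux y ≤ ⊤) t
    exact h1.trans ht
  · intro hy U s
    exact extend_key R M hy (((⊤ : Opens P) : Set P) \ (U : Set P)).ncard U ⊤ le_top le_rfl s
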